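/- arXiv:2004.01858 — 4 statements merged into one kernel-verified Lean document; each statement's English description precedes it below -/
import Mathlib

section
/- Mixed-integer encoding of the piecewise lane-centering barrier constraint (LC-CBF): For all real numbers A, B, and w, the following are equivalent: (1) there exist real numbers s₁ ≥ 0 and s₂ ≥ 0 with s₁ = 0 or s₂ = 0 (SOS-1 constraint on {s₁, s₂}), such that A − w + s₁ ≥ 0, w + s₁ ≥ 0, B + w + s₂ ≥ 0, and −w + s₂ > 0; (2) the piecewise condition holds: if w ≥ 0 then A − w ≥ 0, and if w < 0 then B + w ≥ 0. -/
/-- Mixed-integer encoding of the piecewise lane-centering barrier constraint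
(LC-CBF): the mixed-integer constraints with SOS-1 slack variables `s₁, s₂` are
equivalent to the piecewise condition `w ≥ 0 → A - w ≥ 0` and `w < 0 → B + w ≥ 0`. -/
theorem lc_cbf_mixed_integer_encoding (A B w : ℝ) :
    (∃ s₁ s₂ : ℝ, 0 ≤ s₁ ∧ 0 ≤ s₂ ∧ (s₁ = 0 ∨ s₂ = 0) ∧
      A - w + s₁ ≥ 0 ∧ w + s₁ ≥ 0 ∧ B + w + s₂ ≥ 0 ∧ -w + s₂ > 0) ↔
    ((w ≥ 0 → A - w ≥ 0) ∧ (w < 0 → B + w ≥ 0)) := by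
  constructor
  · rintro ⟨s₁, s₂, hs₁, hs₂, hsos, h1, h2, h3, h4⟩
    rcases hsos with h | h <;> subst h <;> constructor <;> intro hw <;> linarith
  · rintro ⟨h1, h2⟩
    rcases le_or_gt 0 w with hw | hw
    · exact ⟨0, max (w + 1) (-(B + w)), le_rfl,
        le_trans (by linarith) (le_max_left _ _), Or.inl rfl,
        by linarith [h1 hw], by linarith,
        by have := le_max_right (w + 1) (-(B + w)); linarith,
        by have := le_max_left (w + 1) (-(B + w)); linarith⟩
    · exact ⟨max (-w) (w - A), 0,
        le_trans (by linarith) (le_max_left _ _), le_rfl, Or.inr rfl,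
        by have := le_max_right (-w) (w - A); linarith,
        by have := le_max_left (-w) (w - A); linarith,
        by linarith [h2 hw], by linarith⟩
end

section
/- Equivalence between the stopping-distance inequality and nonnegativity of the lane-keeping barrier function: Let a_max > 0, t_s > 0, and let y, v, y_max be real numbers. Then sgn(v)·y + v²/(2·a_max) + (1/2)·|v|·t_s ≤ y_max holds if and only if √(2·a_max·(y_max − sgn(v)·y) + (1/4)·a_max²·t_s²) − |v| − (1/2)·a_max·t_s ≥ 0, where sgn denotes the sign function (sgn(v) = 1 for v > 0, 0 for v = 0, −1 for v < 0) and √ denotes the real square root, defined as 0 on negative arguments. -/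
/-- Equivalence between the stopping-distance inequality and nonnegativity of
the lane-keeping barrier function `h_LK`. -/
theorem stopping_distance_iff_hLK_nonneg
    (amax ts y v ymax : ℝ) (hamax : 0 < amax) (hts : 0 < ts) :
    Real.sign v * y + v ^ 2 / (2 * amax) + (1 / 2) * |v| * ts ≤ ymax ↔
      Real.sqrt (2 * amax * (ymax - Real.sign v * y) + (1 / 4) * amax ^ 2 * ts ^ 2)
        - |v| - (1 / 2) * amax * ts ≥ 0 := by
  have hc : 0 ≤ |v| + (1 / 2) * amax * ts := by positivity
  have h1 : (Real.sqrt (2 * amax * (ymax - Real.sign v * y) + (1 / 4) * amax ^ 2 * ts ^ 2)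
        - |v| - (1 / 2) * amax * ts ≥ 0) ↔
      |v| + (1 / 2) * amax * ts ≤
        Real.sqrt (2 * amax * (ymax - Real.sign v * y) + (1 / 4) * amax ^ 2 * ts ^ 2) := by
    constructor <;> intro h <;> linarith
  have hcpos : 0 < |v| + (1 / 2) * amax * ts := by positivity
  rw [h1, Real.le_sqrt' hcpos]
  have h2 : 2 * amax * (v ^ 2 / (2 * amax)) = v ^ 2 := by field_simp
  have hv : |v| ^ 2 = v ^ 2 := sq_abs v
  constructor <;> intro h
  · nlinarith [abs_nonneg v, h2]
  · have := h
    nlinarith [abs_nonneg v, h2, mul_pos hamax hts]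
end

section
/- Stopping displacement under maximal deceleration: Let a > 0, t_s > 0, v ∈ ℝ, and T ∈ ℕ, and assume |v| = a·t_s·T. Then the total displacement accumulated while decelerating at the maximal rate, namely ∑_{k=0}^{T−1} (v − sgn(v)·a·t_s·k)·t_s, equals v·t_s·T − (1/2)·sgn(v)·t_s²·a·(T² − T), and this quantity equals (1/2)·(v·|v|/a) + (1/2)·v·t_s. Here sgn denotes the sign function (sgn(v) = 1 for v > 0, 0 for v = 0, −1 for v < 0). -/
/-- Stopping displacement under maximal deceleration: with `|v| = a * ts * T`,
the displacement `∑_{k=0}^{T-1} (v - sgn(v) * a * ts * k) * ts` equals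
`v * ts * T - (1/2) * sgn(v) * ts^2 * a * (T^2 - T)`, which in turn equals
`(1/2) * (v * |v| / a) + (1/2) * v * ts`. -/
theorem stopping_displacement_identity
    (a ts v : ℝ) (T : ℕ) (ha : 0 < a) (hts : 0 < ts)
    (hT : |v| = a * ts * (T : ℝ)) :
    (∑ k ∈ Finset.range T, (v - Real.sign v * a * ts * (k : ℝ)) * ts)
        = v * ts * (T : ℝ) - (1 / 2) * Real.sign v * ts ^ 2 * a * ((T : ℝ) ^ 2 - (T : ℝ)) ∧
      v * ts * (T : ℝ) - (1 / 2) * Real.sign v * ts ^ 2 * a * ((T : ℝ) ^ 2 - (T : ℝ))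
        = (1 / 2) * (v * |v| / a) + (1 / 2) * v * ts := by
  have hsum : ∀ n : ℕ, (∑ k ∈ Finset.range n, (k : ℝ)) = ((n : ℝ) ^ 2 - (n : ℝ)) / 2 := by
    intro n
    induction n with
    | zero => simp
    | succ n ih => rw [Finset.sum_range_succ, ih]; push_cast; ring
  constructor
  · have : (∑ k ∈ Finset.range T, (v - Real.sign v * a * ts * (k : ℝ)) * ts)
        = (T : ℝ) * (v * ts) - Real.sign v * a * ts * ts * (∑ k ∈ Finset.range T, (k : ℝ)) := by
      rw [Finset.sum_congr rfl (fun k _ => by ring :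
        ∀ k ∈ Finset.range T, (v - Real.sign v * a * ts * (k : ℝ)) * ts
          = v * ts - Real.sign v * a * ts * ts * (k : ℝ))]
      rw [Finset.sum_sub_distrib, Finset.sum_const, ← Finset.mul_sum]
      simp [mul_comm]
    rw [this, hsum]; ring
  · rcases lt_trichotomy v 0 with hv | hv | hv
    · rw [Real.sign_of_neg hv]
      rw [abs_of_neg hv] at hT ⊢
      have h1 : a * ts * (T : ℝ) = -v := hT.symm
      have h2 : (T : ℝ) = -v / (a * ts) := by
        field_simp at h1 ⊢; linarith
      rw [h2]; field_simp; ring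
    · subst hv; simp
    · rw [Real.sign_of_pos hv]
      rw [abs_of_pos hv] at hT ⊢
      have h2 : (T : ℝ) = v / (a * ts) := by
        field_simp at hT ⊢; linarith
      rw [h2]; field_simp; ring
end

section
/- One-step controlled invariance of the lane-keeping barrier for the discrete double integrator: Let a_max > 0, t_s > 0, and y_max ≥ 0, and define h(y, v) = √(2·a_max·(y_max − sgn(v)·y) + (1/4)·a_max²·t_s²) − |v| − (1/2)·a_max·t_s, where sgn is the sign function and √ is the real square root (0 on negative arguments). If h(y, v) ≥ 0, then there exists a real number acc with |acc| ≤ a_max such that h(y + t_s·v, v + t_s·acc) ≥ 0. -/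
/-- The lane-keeping discrete-time control barrier function. -/
noncomputable def hLK (amax ts ymax y v : ℝ) : ℝ :=
  Real.sqrt (2 * amax * (ymax - Real.sign v * y) + (1 / 4) * amax ^ 2 * ts ^ 2)
    - |v| - (1 / 2) * amax * ts

lemma hLK_neg (amax ts ymax y v : ℝ) :
    hLK amax ts ymax (-y) (-v) = hLK amax ts ymax y v := by
  simp [hLK, Real.sign_neg, abs_neg]

lemma hLK_zero_vel (amax ts ymax : ℝ) (hamax : 0 < amax) (hts : 0 < ts)
    (hymax : 0 ≤ ymax) (y : ℝ) : hLK amax ts ymax y 0 ≥ 0 := by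
  unfold hLK
  simp only [Real.sign_zero, zero_mul, sub_zero, abs_zero]
  have h1 : ((1:ℝ)/2 * amax * ts) ^ 2 ≤ 2 * amax * ymax + 1/4 * amax ^ 2 * ts ^ 2 := by
    nlinarith
  have := Real.sqrt_le_sqrt h1
  rw [Real.sqrt_sq (by positivity)] at this
  linarith

lemma key (amax ts ymax : ℝ) (hamax : 0 < amax) (hts : 0 < ts) (hymax : 0 ≤ ymax)
    (y v : ℝ) (hv : 0 < v) (h0 : hLK amax ts ymax y v ≥ 0) :
    ∃ acc : ℝ, |acc| ≤ amax ∧ hLK amax ts ymax (y + ts * v) (v + ts * acc) ≥ 0 := by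
  rcases le_or_gt v (amax * ts) with hcase | hcase
  · refine ⟨-v / ts, ?_, ?_⟩
    · rw [abs_div, abs_neg, abs_of_pos hv, abs_of_pos hts, div_le_iff₀ hts]
      linarith
    · have : v + ts * (-v / ts) = 0 := by field_simp; ring
      rw [this]
      exact hLK_zero_vel amax ts ymax hamax hts hymax _
  · refine ⟨-amax, by rw [abs_neg, abs_of_pos hamax], ?_⟩
    have hsv : Real.sign v = 1 := Real.sign_of_pos hv
    have hv' : 0 < v + ts * (-amax) := by nlinarith
    have hsv' : Real.sign (v + ts * (-amax)) = 1 := Real.sign_of_pos hv'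
    unfold hLK at h0 ⊢
    rw [hsv, abs_of_pos hv] at h0
    rw [hsv', abs_of_pos hv']
    set A : ℝ := 2 * amax * (ymax - 1 * y) + 1 / 4 * amax ^ 2 * ts ^ 2 with hA
    have hle : v + 1/2 * amax * ts ≤ Real.sqrt A := by linarith
    have hApos : 0 ≤ A := by
      by_contra h
      rw [Real.sqrt_eq_zero_of_nonpos (le_of_not_ge fun hh => h hh)] at hle
      nlinarith
    have hsq : (v + 1/2 * amax * ts) ^ 2 ≤ A := by
      have h2 := pow_le_pow_left₀ (by positivity) hle 2
      rwa [Real.sq_sqrt hApos] at h2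
    set A' : ℝ := 2 * amax * (ymax - 1 * (y + ts * v)) + 1 / 4 * amax ^ 2 * ts ^ 2 with hA'
    have hA'ge : (v - 1/2 * amax * ts) ^ 2 ≤ A' := by
      have : A' = A - 2 * amax * ts * v := by rw [hA', hA]; ring
      nlinarith
    have hs : v - 1/2 * amax * ts ≤ Real.sqrt A' := by
      have h1 := Real.sqrt_le_sqrt hA'ge
      rw [Real.sqrt_sq_eq_abs] at h1
      calc v - 1/2 * amax * ts ≤ |v - 1/2 * amax * ts| := le_abs_self _
        _ ≤ Real.sqrt A' := h1
    linarith

/-- One-step controlled invariance of the lane-keeping barrier for the discrete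
double integrator: if `hLK amax ts ymax y v ≥ 0`, then there is an admissible
acceleration `acc` with `|acc| ≤ amax` keeping the barrier nonnegative at the
next step. -/
theorem hLK_one_step_controlled_invariance
    (amax ts ymax : ℝ) (hamax : 0 < amax) (hts : 0 < ts) (hymax : 0 ≤ ymax)
    (y v : ℝ) (h0 : hLK amax ts ymax y v ≥ 0) :
    ∃ acc : ℝ, |acc| ≤ amax ∧ hLK amax ts ymax (y + ts * v) (v + ts * acc) ≥ 0 := by
  rcases lt_trichotomy v 0 with hv | hv | hv
  · obtain ⟨acc, hacc, hbar⟩ := key amax ts ymax hamax hts hymax (-y) (-v)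
      (by linarith) (by rwa [hLK_neg])
    refine ⟨-acc, by rwa [abs_neg], ?_⟩
    have he : hLK amax ts ymax (-(y + ts * v)) (-(v + ts * -acc))
        = hLK amax ts ymax (-y + ts * -v) (-v + ts * acc) := by ring_nf
    rw [← hLK_neg]
    rw [he]
    exact hbar
  · subst hv
    exact ⟨0, by simpa using le_of_lt hamax, by
      simpa using hLK_zero_vel amax ts ymax hamax hts hymax (y + ts * 0)⟩
  · exact key amax ts ymax hamax hts hymax y v hv h0
end
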